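/- Let B be freely generated by A_1,…,A_3, and let B_13, B_23 be the subalgebras generated by {A_1,A_3} and {A_2,A_3} respectively. Any function f on B_13 ∪ B_23 whose restrictions to B_13 and B_23 are normalized measures extends to a normalized measure on B. -/

import Mathlib

def IsNormMeasure {B : Type*} [BooleanAlgebra B] (m : B → ℝ) : Prop :=
  (∀ x, 0 ≤ m x) ∧ (∀ x y : B, x ⊓ y = ⊥ → m (x ⊔ y) = m x + m y) ∧ m ⊤ = 1

/-- `m` restricts to a normalized measure on the subset `S`. -/
def IsMeasureOn {B : Type*} [BooleanAlgebra B] (m : B → ℝ) (S : Set B) : Prop :=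
  (∀ x ∈ S, 0 ≤ m x) ∧
  (∀ x ∈ S, ∀ y ∈ S, x ⊓ y = ⊥ → m (x ⊔ y) = m x + m y) ∧ m ⊤ = 1

/-- The Boolean subalgebra generated by `G`: the smallest subset containing `G`, `⊤`, `⊥`,
closed under meet, join and complement. -/
def subalgClosure {B : Type*} [BooleanAlgebra B] (G : Set B) : Set B :=
  ⋂₀ {S : Set B | G ⊆ S ∧ (⊤ : B) ∈ S ∧ (⊥ : B) ∈ S ∧ (∀ x ∈ S, xᶜ ∈ S) ∧
      (∀ x ∈ S, ∀ y ∈ S, x ⊓ y ∈ S) ∧ (∀ x ∈ S, ∀ y ∈ S, x ⊔ y ∈ S)}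

def IsFreelyGeneratedBy {n : ℕ} {B : Type*} [BooleanAlgebra B] (A : Fin n → B) : Prop :=
  ∀ (C : Type) [BooleanAlgebra C], ∀ g : Fin n → C,
    ∃! φ : BoundedLatticeHom B C, ∀ i, φ (A i) = g i

namespace Stmt7Aux

variable {B : Type*} [BooleanAlgebra B]

def lit (x : B) (b : Bool) : B := match b with
  | true => x
  | false => xᶜ

@[simp] lemma lit_true (x : B) : lit x true = x := rfl
@[simp] lemma lit_false (x : B) : lit x false = xᶜ := rfl

def AtF (x y : B) : Bool × Bool → B := fun p => lit x p.1 ⊓ lit y p.2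

lemma mem_closure_of_mem {G : Set B} {x : B} (hx : x ∈ G) : x ∈ subalgClosure G :=
  Set.mem_sInter.2 fun _ hS => hS.1 hx

lemma top_mem_closure (G : Set B) : ⊤ ∈ subalgClosure G :=
  Set.mem_sInter.2 fun _ hS => hS.2.1

lemma bot_mem_closure (G : Set B) : ⊥ ∈ subalgClosure G :=
  Set.mem_sInter.2 fun _ hS => hS.2.2.1

lemma compl_mem_closure {G : Set B} {x : B} (hx : x ∈ subalgClosure G) :
    xᶜ ∈ subalgClosure G :=
  Set.mem_sInter.2 fun S hS => hS.2.2.2.1 x (Set.mem_sInter.1 hx S hS)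

lemma inf_mem_closure {G : Set B} {x y : B} (hx : x ∈ subalgClosure G)
    (hy : y ∈ subalgClosure G) : x ⊓ y ∈ subalgClosure G :=
  Set.mem_sInter.2 fun S hS =>
    hS.2.2.2.2.1 x (Set.mem_sInter.1 hx S hS) y (Set.mem_sInter.1 hy S hS)

lemma sup_mem_closure {G : Set B} {x y : B} (hx : x ∈ subalgClosure G)
    (hy : y ∈ subalgClosure G) : x ⊔ y ∈ subalgClosure G :=
  Set.mem_sInter.2 fun S hS =>
    hS.2.2.2.2.2 x (Set.mem_sInter.1 hx S hS) y (Set.mem_sInter.1 hy S hS)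

lemma lit_mem_closure {G : Set B} {x : B} (hx : x ∈ subalgClosure G) (b : Bool) :
    lit x b ∈ subalgClosure G := by
  cases b
  · exact compl_mem_closure hx
  · exact hx

lemma atF_mem_closure {x0 x2 : B} (p : Bool × Bool) :
    AtF x0 x2 p ∈ subalgClosure {x0, x2} :=
  inf_mem_closure (lit_mem_closure (mem_closure_of_mem (by simp)) _)
    (lit_mem_closure (mem_closure_of_mem (by simp)) _)

lemma split_sup (x z : B) : (x ⊓ z) ⊔ (xᶜ ⊓ z) = z := by
  rw [← inf_sup_right, sup_compl_eq_top, top_inf_eq]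

lemma split_sup' (x z : B) : (z ⊓ x) ⊔ (z ⊓ xᶜ) = z := by
  rw [← inf_sup_left, sup_compl_eq_top, inf_top_eq]

lemma split_inf (x z : B) : (x ⊓ z) ⊓ (xᶜ ⊓ z) = ⊥ := by
  rw [inf_inf_inf_comm, inf_compl_eq_bot, bot_inf_eq]

lemma atF_disj (x y : B) : ∀ p q : Bool × Bool, p ≠ q → AtF x y p ⊓ AtF x y q = ⊥ := by
  have key : ∀ u v u' v' : B, u ⊓ u' = ⊥ ∨ v ⊓ v' = ⊥ → (u ⊓ v) ⊓ (u' ⊓ v') = ⊥ := by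
    intro u v u' v' h
    rw [inf_inf_inf_comm]
    rcases h with h | h <;> simp [h]
  rintro ⟨a, c⟩ ⟨a', c'⟩ h
  apply key
  rcases a <;> rcases c <;> rcases a' <;> rcases c' <;> simp_all

variable {ι : Type*} [DecidableEq ι]

lemma at_inf_sup (At : ι → B) (hd : ∀ i j, i ≠ j → At i ⊓ At j = ⊥)
    (i : ι) (T : Finset ι) (hi : i ∉ T) : At i ⊓ T.sup At = ⊥ := by
  induction T using Finset.induction with
  | empty => simp
  | @insert j T hj ih =>
    simp only [Finset.mem_insert, not_or] at hi
    rw [Finset.sup_insert, inf_sup_left, hd i j hi.1, ih hi.2, bot_sup_eq]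

lemma sup_inf_sup (At : ι → B) (hd : ∀ i j, i ≠ j → At i ⊓ At j = ⊥)
    (T T' : Finset ι) : T.sup At ⊓ T'.sup At = (T ∩ T').sup At := by
  induction T using Finset.induction with
  | empty => simp
  | @insert i T hi ih =>
    rw [Finset.sup_insert, inf_sup_right, ih]
    by_cases h : i ∈ T'
    · rw [Finset.insert_inter_of_mem h, Finset.sup_insert,
        inf_eq_left.2 (Finset.le_sup h)]
    · rw [Finset.insert_inter_of_notMem h, at_inf_sup At hd i T' h, bot_sup_eq]

lemma sup_mem {S : Set B} (hbot : ⊥ ∈ S) (hsup : ∀ x ∈ S, ∀ y ∈ S, x ⊔ y ∈ S)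
    (At : ι → B) (hAt : ∀ i, At i ∈ S) (T : Finset ι) : T.sup At ∈ S := by
  induction T using Finset.induction with
  | empty => simpa using hbot
  | @insert i T hi ih =>
    rw [Finset.sup_insert]
    exact hsup _ (hAt i) _ ih

lemma m_sup (m : B → ℝ) {S : Set B} (hbot : ⊥ ∈ S)
    (hsup : ∀ x ∈ S, ∀ y ∈ S, x ⊔ y ∈ S)
    (At : ι → B) (hAt : ∀ i, At i ∈ S)
    (hd : ∀ i j, i ≠ j → At i ⊓ At j = ⊥) (hm0 : m ⊥ = 0)
    (hadd : ∀ x ∈ S, ∀ y ∈ S, x ⊓ y = ⊥ → m (x ⊔ y) = m x + m y)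
    (T : Finset ι) : m (T.sup At) = ∑ i ∈ T, m (At i) := by
  induction T using Finset.induction with
  | empty => simpa using hm0
  | @insert i T hi ih =>
    rw [Finset.sup_insert, Finset.sum_insert hi, ← ih,
      hadd _ (hAt i) _ (sup_mem hbot hsup At hAt T) (at_inf_sup At hd i T hi)]

lemma univ_sup_atF (x0 x2 : B) : (Finset.univ : Finset (Bool × Bool)).sup (AtF x0 x2) = ⊤ := by
  have huniv : (Finset.univ : Finset (Bool × Bool)) =
      {(true, true), (true, false), (false, true), (false, false)} := by decide
  rw [huniv]
  simp only [Finset.sup_insert, Finset.sup_singleton]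
  show (x0 ⊓ x2) ⊔ ((x0 ⊓ x2ᶜ) ⊔ ((x0ᶜ ⊓ x2) ⊔ (x0ᶜ ⊓ x2ᶜ))) = ⊤
  rw [← sup_assoc, split_sup' x2 x0, split_sup' x2 x0ᶜ, sup_compl_eq_top]

lemma rep {x0 x2 x : B} (hx : x ∈ subalgClosure {x0, x2}) :
    ∃ T : Finset (Bool × Bool), x = T.sup (AtF x0 x2) := by
  refine Set.mem_sInter.1 hx {x | ∃ T : Finset (Bool × Bool), x = T.sup (AtF x0 x2)}
    ⟨?_, ?_, ?_, ?_, ?_, ?_⟩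
  · rintro y (rfl | rfl)
    · refine ⟨{(true, true), (true, false)}, ?_⟩
      simp only [Finset.sup_insert, Finset.sup_singleton]
      show y = (y ⊓ x2) ⊔ (y ⊓ x2ᶜ)
      rw [split_sup']
    · refine ⟨{(true, true), (false, true)}, ?_⟩
      simp only [Finset.sup_insert, Finset.sup_singleton]
      show y = (x0 ⊓ y) ⊔ (x0ᶜ ⊓ y)
      rw [split_sup]
  · exact ⟨Finset.univ, (univ_sup_atF x0 x2).symm⟩
  · exact ⟨∅, by simp⟩
  · rintro y ⟨T, rfl⟩
    refine ⟨Tᶜ, compl_unique ?_ ?_⟩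
    · rw [sup_inf_sup _ (atF_disj x0 x2), Finset.inter_compl, Finset.sup_empty]
    · rw [← Finset.sup_union, Finset.union_compl, univ_sup_atF]
  · rintro y ⟨T, rfl⟩ z ⟨T', rfl⟩
    exact ⟨T ∩ T', sup_inf_sup _ (atF_disj x0 x2) T T'⟩
  · rintro y ⟨T, rfl⟩ z ⟨T', rfl⟩
    exact ⟨T ∪ T', (Finset.sup_union).symm⟩



open Classical in
lemma coupling (p3 : Bool → ℝ) (p13 p23 : Bool → Bool → ℝ)
    (h13n : ∀ a c, 0 ≤ p13 a c) (h23n : ∀ b c, 0 ≤ p23 b c)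
    (h13m : ∀ c, p13 true c + p13 false c = p3 c)
    (h23m : ∀ c, p23 true c + p23 false c = p3 c) :
    ∃ w : Bool × Bool × Bool → ℝ, (∀ v, 0 ≤ w v) ∧
      (∀ a c, w (a, true, c) + w (a, false, c) = p13 a c) ∧
      (∀ b c, w (true, b, c) + w (false, b, c) = p23 b c) := by
  have hp3 : ∀ c, 0 ≤ p3 c := fun c => (h13m c) ▸ add_nonneg (h13n _ _) (h13n _ _)
  refine ⟨fun v => if p3 v.2.2 = 0 then 0
      else p13 v.1 v.2.2 * p23 v.2.1 v.2.2 / p3 v.2.2, ?_, ?_, ?_⟩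
  · intro v
    dsimp only
    split
    · exact le_rfl
    · exact div_nonneg (mul_nonneg (h13n _ _) (h23n _ _)) (hp3 _)
  · intro a c
    by_cases h : p3 c = 0
    · simp only [h, if_pos rfl]
      have := h13m c
      have := h13n true c
      have := h13n false c
      cases a <;> simp <;> linarith
    · simp only [if_neg h]
      rw [← add_div, ← mul_add, h23m c, mul_div_assoc, div_self h, mul_one]
  · intro b c
    by_cases h : p3 c = 0
    · simp only [h, if_pos rfl]
      have := h23m c
      have := h23n true c
      have := h23n false c
      cases b <;> simp <;> linarith
    · simp only [if_neg h]
      rw [← add_div, ← add_mul, h13m c, mul_comm, mul_div_assoc, div_self h, mul_one]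
  
end Stmt7Aux

open Stmt7Aux

/-- For `B` free on three generators `A_1, A_2, A_3`: any function on
`B_13 ∪ B_23` restricting to normalized measures on the subalgebras `B_13` (generated by
`{A_1, A_3}`) and `B_23` (generated by `{A_2, A_3}`) extends to a normalized measure on `B`. -/
theorem stmt7 (B : Type*) [BooleanAlgebra B] (A : Fin 3 → B)
    (hA : IsFreelyGeneratedBy A) (f : B → ℝ)
    (h13 : IsMeasureOn f (subalgClosure {A 0, A 2}))
    (h23 : IsMeasureOn f (subalgClosure {A 1, A 2})) :
    ∃ μ : B → ℝ, IsNormMeasure μ ∧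
      ∀ x ∈ subalgClosure {A 0, A 2} ∪ subalgClosure {A 1, A 2}, μ x = f x := by
  classical
  obtain ⟨f13nn, f13add, ftop⟩ := h13
  obtain ⟨f23nn, f23add, -⟩ := h23
  obtain ⟨φ, hφ, -⟩ := hA (Set (Bool × Bool × Bool))
      ![{v | v.1 = true}, {v | v.2.1 = true}, {v | v.2.2 = true}]
  have hφ0 : φ (A 0) = {v : Bool × Bool × Bool | v.1 = true} := by simpa using hφ 0
  have hφ1 : φ (A 1) = {v : Bool × Bool × Bool | v.2.1 = true} := by simpa using hφ 1
  have hφ2 : φ (A 2) = {v : Bool × Bool × Bool | v.2.2 = true} := by simpa using hφ 2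
  have hl0 : ∀ a, φ (lit (A 0) a) = {v : Bool × Bool × Bool | v.1 = a} := by
    intro a; cases a
    · rw [lit_false, map_compl', hφ0]; ext v; simp
    · rw [lit_true, hφ0]
  have hl1 : ∀ b, φ (lit (A 1) b) = {v : Bool × Bool × Bool | v.2.1 = b} := by
    intro b; cases b
    · rw [lit_false, map_compl', hφ1]; ext v; simp
    · rw [lit_true, hφ1]
  have hl2 : ∀ c, φ (lit (A 2) c) = {v : Bool × Bool × Bool | v.2.2 = c} := by
    intro c; cases c
    · rw [lit_false, map_compl', hφ2]; ext v; simp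
    · rw [lit_true, hφ2]
  -- memberships
  have hA0mem : A 0 ∈ subalgClosure {A 0, A 2} := mem_closure_of_mem (by simp)
  have hA2mem : A 2 ∈ subalgClosure {A 0, A 2} := mem_closure_of_mem (by simp)
  have hA1mem' : A 1 ∈ subalgClosure {A 1, A 2} := mem_closure_of_mem (by simp)
  have hA2mem' : A 2 ∈ subalgClosure {A 1, A 2} := mem_closure_of_mem (by simp)
  have hbot13 : (⊥ : B) ∈ subalgClosure {A 0, A 2} := bot_mem_closure _
  have hbot23 : (⊥ : B) ∈ subalgClosure {A 1, A 2} := bot_mem_closure _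
  have hat13mem : ∀ p : Bool × Bool, AtF (A 0) (A 2) p ∈ subalgClosure {A 0, A 2} :=
    fun p => atF_mem_closure p
  have hat23mem : ∀ p : Bool × Bool, AtF (A 1) (A 2) p ∈ subalgClosure {A 1, A 2} :=
    fun p => atF_mem_closure p
  have hfbot : f ⊥ = 0 := by
    have := f13add ⊥ hbot13 ⊥ hbot13 (by simp)
    simp only [sup_idem] at this
    linarith
  -- marginals
  have h13m : ∀ c, f (lit (A 0) true ⊓ lit (A 2) c) + f (lit (A 0) false ⊓ lit (A 2) c)
      = f (lit (A 2) c) := by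
    intro c
    have hd : (lit (A 0) true ⊓ lit (A 2) c) ⊓ (lit (A 0) false ⊓ lit (A 2) c) = ⊥ := by
      rw [lit_true, lit_false]; exact split_inf _ _
    have hs : (lit (A 0) true ⊓ lit (A 2) c) ⊔ (lit (A 0) false ⊓ lit (A 2) c)
        = lit (A 2) c := by
      rw [lit_true, lit_false]; exact split_sup _ _
    rw [← f13add (lit (A 0) true ⊓ lit (A 2) c) (hat13mem (true, c))
      (lit (A 0) false ⊓ lit (A 2) c) (hat13mem (false, c)) hd, hs]
  have h23m : ∀ c, f (lit (A 1) true ⊓ lit (A 2) c) + f (lit (A 1) false ⊓ lit (A 2) c)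
      = f (lit (A 2) c) := by
    intro c
    have hd : (lit (A 1) true ⊓ lit (A 2) c) ⊓ (lit (A 1) false ⊓ lit (A 2) c) = ⊥ := by
      rw [lit_true, lit_false]; exact split_inf _ _
    have hs : (lit (A 1) true ⊓ lit (A 2) c) ⊔ (lit (A 1) false ⊓ lit (A 2) c)
        = lit (A 2) c := by
      rw [lit_true, lit_false]; exact split_sup _ _
    rw [← f23add (lit (A 1) true ⊓ lit (A 2) c) (hat23mem (true, c))
      (lit (A 1) false ⊓ lit (A 2) c) (hat23mem (false, c)) hd, hs]
  have hp3sum : f (lit (A 2) true) + f (lit (A 2) false) = 1 := by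
    rw [lit_true, lit_false,
      ← f13add _ hA2mem _ (compl_mem_closure hA2mem) inf_compl_eq_bot,
      sup_compl_eq_top, ftop]
  obtain ⟨w, hw0, hwb, hwa⟩ := coupling (fun c => f (lit (A 2) c))
    (fun a c => f (lit (A 0) a ⊓ lit (A 2) c)) (fun b c => f (lit (A 1) b ⊓ lit (A 2) c))
    (fun a c => f13nn _ (hat13mem (a, c))) (fun b c => f23nn _ (hat23mem (b, c)))
    h13m h23m
  set μ : B → ℝ := fun x => ∑ v : Bool × Bool × Bool, if v ∈ φ x then w v else 0 with hμ
  have hμnn : ∀ x, 0 ≤ μ x := by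
    intro x
    simp only [hμ]
    refine Finset.sum_nonneg fun v _ => ?_
    split
    · exact hw0 v
    · exact le_rfl
  have hμadd : ∀ x y : B, x ⊓ y = ⊥ → μ (x ⊔ y) = μ x + μ y := by
    intro x y hxy
    simp only [hμ]
    rw [map_sup, ← Finset.sum_add_distrib]
    refine Finset.sum_congr rfl fun v _ => ?_
    by_cases hx : v ∈ φ x <;> by_cases hy : v ∈ φ y
    · exfalso
      have hv : v ∈ φ (x ⊓ y) := by rw [map_inf]; exact ⟨hx, hy⟩
      rw [hxy, map_bot] at hv
      exact absurd hv (by simp)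
    · simp [Set.mem_union, hx, hy]
    · simp [Set.mem_union, hx, hy]
    · simp [Set.mem_union, hx, hy]
  have hμbot : μ ⊥ = 0 := by
    simp only [hμ]
    rw [map_bot]
    simp [Set.bot_eq_empty]
  have hμtop : μ ⊤ = 1 := by
    simp only [hμ]
    rw [map_top]
    simp only [Set.top_eq_univ, Set.mem_univ, if_true]
    simp only [Fintype.sum_prod_type, Fintype.sum_bool]
    have e1 := hwb true true; have e2 := hwb true false
    have e3 := hwb false true; have e4 := hwb false false
    have m1 := h13m true; have m2 := h13m false
    linarith [hp3sum]
  have hat13 : ∀ p : Bool × Bool, μ (AtF (A 0) (A 2) p) = f (AtF (A 0) (A 2) p) := by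
    rintro ⟨a, c⟩
    have hset : φ (AtF (A 0) (A 2) (a, c))
        = {v : Bool × Bool × Bool | v.1 = a ∧ v.2.2 = c} := by
      show φ (lit (A 0) a ⊓ lit (A 2) c) = _
      rw [map_inf, hl0, hl2]
      ext v; simp
    have hval : μ (AtF (A 0) (A 2) (a, c)) = w (a, true, c) + w (a, false, c) := by
      simp only [hμ]
      rw [hset]
      rcases a <;> rcases c <;>
        simp [Fintype.sum_prod_type, Fintype.sum_bool, Set.mem_setOf_eq]
    rw [hval]
    exact hwb a c
  have hat23 : ∀ p : Bool × Bool, μ (AtF (A 1) (A 2) p) = f (AtF (A 1) (A 2) p) := by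
    rintro ⟨b, c⟩
    have hset : φ (AtF (A 1) (A 2) (b, c))
        = {v : Bool × Bool × Bool | v.2.1 = b ∧ v.2.2 = c} := by
      show φ (lit (A 1) b ⊓ lit (A 2) c) = _
      rw [map_inf, hl1, hl2]
      ext v; simp
    have hval : μ (AtF (A 1) (A 2) (b, c)) = w (true, b, c) + w (false, b, c) := by
      simp only [hμ]
      rw [hset]
      rcases b <;> rcases c <;>
        simp [Fintype.sum_prod_type, Fintype.sum_bool, Set.mem_setOf_eq]
    rw [hval]
    exact hwa b c
  refine ⟨μ, ⟨hμnn, hμadd, hμtop⟩, ?_⟩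
  rintro x (hx | hx)
  · obtain ⟨T, rfl⟩ := rep hx
    rw [m_sup μ (S := Set.univ) (Set.mem_univ _) (fun x _ y _ => Set.mem_univ _) _
        (fun _ => Set.mem_univ _) (atF_disj _ _) hμbot (fun x _ y _ h => hμadd x y h) T,
      m_sup f hbot13 (fun x hx y hy => sup_mem_closure hx hy) _
        hat13mem (atF_disj _ _) hfbot f13add T]
    exact Finset.sum_congr rfl fun p _ => hat13 p
  · obtain ⟨T, rfl⟩ := rep hx
    rw [m_sup μ (S := Set.univ) (Set.mem_univ _) (fun x _ y _ => Set.mem_univ _) _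
        (fun _ => Set.mem_univ _) (atF_disj _ _) hμbot (fun x _ y _ h => hμadd x y h) T,
      m_sup f hbot23 (fun x hx y hy => sup_mem_closure hx hy) _
        hat23mem (atF_disj _ _) hfbot f23add T]
    exact Finset.sum_congr rfl fun p _ => hat23 p
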